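/- (Prime integrals in terms of the radial deformation, Lemma 2.1.) One has: (i) (1/(2i))·∫₀^{2π} conj(w(θ))·∂_θw(θ) dθ = π + ∫₀^{2π} ξ(θ) dθ; (ii) (1/(2i))·∫₀^{2π} |w(θ)|²·∂_θw(θ) dθ = (1/3)·∫₀^{2π} (1+2ξ(θ))^{3/2}·w₀(θ) dθ; (iii) (1/(4i))·∫₀^{2π} |w(θ)|²·conj(w(θ))·∂_θw(θ) dθ = (1/4)·∫₀^{2π} (1+2ξ(θ))²·g_γ(θ) dθ. -/

import Mathlib

open Real MeasureTheory

/-- `g_γ(θ) := γ cos²θ + γ⁻¹ sin²θ`. -/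
noncomputable def gell (γ θ : ℝ) : ℝ := γ * Real.cos θ ^ 2 + γ⁻¹ * Real.sin θ ^ 2

/-- `w₀(θ) := √γ cos θ + i γ^{−1/2} sin θ`. -/
noncomputable def w0 (γ θ : ℝ) : ℂ :=
  (Real.sqrt γ * Real.cos θ : ℝ) + Complex.I * ((Real.sin θ / Real.sqrt γ : ℝ) : ℂ)

/-- `w(θ) := (1+2ξ(θ))^{1/2} w₀(θ)`. -/
noncomputable def wlift (γ : ℝ) (ξ : ℝ → ℝ) (θ : ℝ) : ℂ :=
  (Real.sqrt (1 + 2 * ξ θ) : ℂ) * w0 γ θ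

/-- Derivative of `w₀`. -/
noncomputable def w0d (γ θ : ℝ) : ℂ :=
  ((-(Real.sqrt γ * Real.sin θ) : ℝ) : ℂ) + Complex.I * ((Real.cos θ / Real.sqrt γ : ℝ) : ℂ)

lemma hasDerivAt_w0 (γ θ : ℝ) : HasDerivAt (w0 γ) (w0d γ θ) θ := by
  unfold w0 w0d
  have h1 : HasDerivAt (fun θ : ℝ => Real.sqrt γ * Real.cos θ) (-(Real.sqrt γ * Real.sin θ)) θ := by
    simpa [mul_comm] using (Real.hasDerivAt_cos θ).const_mul (Real.sqrt γ)
  have h2 : HasDerivAt (fun θ : ℝ => Real.sin θ / Real.sqrt γ) (Real.cos θ / Real.sqrt γ) θ := by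
    simpa [div_eq_mul_inv, mul_comm] using (Real.hasDerivAt_sin θ).div_const (Real.sqrt γ)
  exact (h1.ofReal_comp).add ((h2.ofReal_comp).const_mul Complex.I)

lemma key1 (γ : ℝ) (hγ : 0 < γ) (θ : ℝ) :
    (starRingEnd ℂ) (w0 γ θ) * w0d γ θ
      = (((γ⁻¹ - γ) * (Real.sin θ * Real.cos θ) : ℝ) : ℂ) + Complex.I := by
  have hs : Real.sqrt γ ≠ 0 := (Real.sqrt_pos.2 hγ).ne'
  have hs2 : Real.sqrt γ * Real.sqrt γ = γ := Real.mul_self_sqrt hγ.le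
  have ht : Real.sin θ ^ 2 + Real.cos θ ^ 2 = 1 := Real.sin_sq_add_cos_sq θ
  unfold w0 w0d
  set c := Real.cos θ with hc
  set s := Real.sin θ with hsn
  apply Complex.ext
  · simp only [Complex.add_re, Complex.add_im, Complex.mul_re, Complex.mul_im,
      Complex.ofReal_re, Complex.ofReal_im, Complex.I_re, Complex.I_im,
      Complex.conj_re, Complex.conj_im, map_add, map_mul, Complex.conj_I,
      Complex.conj_ofReal, Complex.one_re, Complex.one_im, Complex.neg_re, Complex.neg_im]
    field_simp
    linear_combination (-(c * s * (1 + Real.sqrt γ ^ 2 * γ))) * hs2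
  · simp only [Complex.add_re, Complex.add_im, Complex.mul_re, Complex.mul_im,
      Complex.ofReal_re, Complex.ofReal_im, Complex.I_re, Complex.I_im,
      Complex.conj_re, Complex.conj_im, map_add, map_mul, Complex.conj_I,
      Complex.conj_ofReal, Complex.one_re, Complex.one_im, Complex.neg_re, Complex.neg_im]
    field_simp
    linear_combination Real.sqrt γ ^ 2 * ht

lemma key2 (γ : ℝ) (hγ : 0 < γ) (θ : ℝ) : Complex.normSq (w0 γ θ) = gell γ θ := by
  have hs : Real.sqrt γ ≠ 0 := (Real.sqrt_pos.2 hγ).ne'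
  have hs2 : Real.sqrt γ * Real.sqrt γ = γ := Real.mul_self_sqrt hγ.le
  unfold w0 gell
  set c := Real.cos θ
  set s := Real.sin θ
  simp [Complex.normSq_apply]
  field_simp
  linear_combination (Real.sqrt γ ^ 2 * c ^ 2 * γ - s ^ 2) * hs2

lemma continuous_w0 (γ : ℝ) : Continuous (w0 γ) := by unfold w0; fun_prop

lemma continuous_w0d (γ : ℝ) : Continuous (w0d γ) := by unfold w0d; fun_prop

lemma continuous_gell (γ : ℝ) : Continuous (gell γ) := by unfold gell; fun_prop

lemma hasDerivAt_gell (γ θ : ℝ) :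
    HasDerivAt (gell γ) ((γ⁻¹ - γ) * (2 * (Real.sin θ * Real.cos θ))) θ := by
  unfold gell
  have h1 : HasDerivAt (fun θ : ℝ => Real.cos θ ^ 2) (2 * Real.cos θ * (-Real.sin θ)) θ := by
    simpa using (Real.hasDerivAt_cos θ).fun_pow 2
  have h2 : HasDerivAt (fun θ : ℝ => Real.sin θ ^ 2) (2 * Real.sin θ * Real.cos θ) θ := by
    simpa using (Real.hasDerivAt_sin θ).fun_pow 2
  convert (h1.const_mul γ).fun_add (h2.const_mul γ⁻¹) using 1
  · rfl
  · rfl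
  ring

lemma hasDerivAt_rho (ξ : ℝ → ℝ) (hξ : ContDiff ℝ 1 ξ) (hpos : ∀ θ, 0 < 1 + 2 * ξ θ) (θ : ℝ) :
    HasDerivAt (fun θ => Real.sqrt (1 + 2 * ξ θ))
      (deriv ξ θ / Real.sqrt (1 + 2 * ξ θ)) θ := by
  have hd : HasDerivAt (fun θ : ℝ => 1 + 2 * ξ θ) (2 * deriv ξ θ) θ :=
    (((hξ.differentiable one_ne_zero) θ).hasDerivAt.const_mul 2).const_add 1
  have := hd.sqrt (hpos θ).ne'
  rwa [mul_div_mul_left _ _ (two_ne_zero)] at this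

/-- Explicit derivative of `wlift`. -/
noncomputable def Wd (γ : ℝ) (ξ : ℝ → ℝ) (θ : ℝ) : ℂ :=
  ((deriv ξ θ / Real.sqrt (1 + 2 * ξ θ) : ℝ) : ℂ) * w0 γ θ
    + ((Real.sqrt (1 + 2 * ξ θ) : ℝ) : ℂ) * w0d γ θ

lemma hasDerivAt_wlift (γ : ℝ) (ξ : ℝ → ℝ) (hξ : ContDiff ℝ 1 ξ)
    (hpos : ∀ θ, 0 < 1 + 2 * ξ θ) (θ : ℝ) :
    HasDerivAt (wlift γ ξ) (Wd γ ξ θ) θ :=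
  ((hasDerivAt_rho ξ hξ hpos θ).ofReal_comp).mul (hasDerivAt_w0 γ θ)

lemma conj_w0_mul (γ : ℝ) (hγ : 0 < γ) (θ : ℝ) :
    (starRingEnd ℂ) (w0 γ θ) * w0 γ θ = ((gell γ θ : ℝ) : ℂ) := by
  rw [mul_comm, Complex.mul_conj, key2 γ hγ]

lemma key4 (γ : ℝ) (hγ : 0 < γ) (θ : ℝ) :
    ((gell γ θ : ℝ) : ℂ) * w0d γ θ
      = (((γ⁻¹ - γ) * (Real.sin θ * Real.cos θ) : ℝ) : ℂ) * w0 γ θ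
        + Complex.I * w0 γ θ := by
  calc ((gell γ θ : ℝ) : ℂ) * w0d γ θ
      = ((starRingEnd ℂ) (w0 γ θ) * w0 γ θ) * w0d γ θ := by rw [conj_w0_mul γ hγ]
    _ = w0 γ θ * ((starRingEnd ℂ) (w0 γ θ) * w0d γ θ) := by ring
    _ = w0 γ θ * ((((γ⁻¹ - γ) * (Real.sin θ * Real.cos θ) : ℝ) : ℂ) + Complex.I) := by
        rw [key1 γ hγ]
    _ = _ := by ring

/-- Prime integrals in terms of the radial deformation (Lemma 2.1). -/
theorem prime_integrals
    (γ : ℝ) (hγ : 1 ≤ γ)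
    (ξ : ℝ → ℝ) (hξ : ContDiff ℝ 1 ξ)
    (hper : ∀ θ, ξ (θ + 2 * π) = ξ θ)
    (hpos : ∀ θ, 0 < 1 + 2 * ξ θ) :
    -- (i)
    (1 / (2 * Complex.I)) *
        (∫ θ in (0:ℝ)..(2 * π), (starRingEnd ℂ) (wlift γ ξ θ) * deriv (wlift γ ξ) θ)
      = Complex.ofReal (π + ∫ θ in (0:ℝ)..(2 * π), ξ θ) ∧
    -- (ii)
    (1 / (2 * Complex.I)) *
        (∫ θ in (0:ℝ)..(2 * π),
          ((Complex.normSq (wlift γ ξ θ) : ℝ) : ℂ) * deriv (wlift γ ξ) θ)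
      = (1 / 3 : ℂ) *
        (∫ θ in (0:ℝ)..(2 * π), (((1 + 2 * ξ θ) ^ ((3:ℝ)/2) : ℝ) : ℂ) * w0 γ θ) ∧
    -- (iii)
    (1 / (4 * Complex.I)) *
        (∫ θ in (0:ℝ)..(2 * π),
          ((Complex.normSq (wlift γ ξ θ) : ℝ) : ℂ) *
            (starRingEnd ℂ) (wlift γ ξ θ) * deriv (wlift γ ξ) θ)
      = Complex.ofReal ((1 / 4) * ∫ θ in (0:ℝ)..(2 * π), (1 + 2 * ξ θ) ^ 2 * gell γ θ) := by
  have hγ0 : (0:ℝ) < γ := lt_of_lt_of_le one_pos hγ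
  set ρ : ℝ → ℝ := fun θ => Real.sqrt (1 + 2 * ξ θ) with hρdef
  have hρpos : ∀ θ, 0 < ρ θ := fun θ => Real.sqrt_pos.2 (hpos θ)
  have hρsq : ∀ θ, ρ θ * ρ θ = 1 + 2 * ξ θ := fun θ => Real.mul_self_sqrt (hpos θ).le
  have hderiv : ∀ θ, deriv (wlift γ ξ) θ = Wd γ ξ θ :=
    fun θ => (hasDerivAt_wlift γ ξ hξ hpos θ).deriv
  have hξ2π : ξ (2*π) = ξ 0 := by simpa using hper 0
  -- continuity facts
  have cξ : Continuous ξ := hξ.continuous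
  have cξ' : Continuous (deriv ξ) := hξ.continuous_deriv le_rfl
  have cρ : Continuous ρ := Real.continuous_sqrt.comp (by fun_prop)
  set f : ℝ → ℝ := fun θ =>
    deriv ξ θ * gell γ θ + (1 + 2 * ξ θ) * ((γ⁻¹ - γ) * (Real.sin θ * Real.cos θ)) with hfdef
  have cf : Continuous f := by
    apply Continuous.add (cξ'.mul (continuous_gell γ))
    fun_prop
  -- pointwise identity used in (i) and (iii)
  have hpt : ∀ θ, (starRingEnd ℂ) (wlift γ ξ θ) * deriv (wlift γ ξ) θ
      = ((f θ : ℝ) : ℂ) + Complex.I * ((1 + 2 * ξ θ : ℝ) : ℂ) := by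
    intro θ
    rw [hderiv]
    have hc : (starRingEnd ℂ) (wlift γ ξ θ) = ((ρ θ : ℝ) : ℂ) * (starRingEnd ℂ) (w0 γ θ) := by
      simp [wlift, map_mul, Complex.conj_ofReal, hρdef]
    rw [hc]
    have expand : ((ρ θ : ℝ) : ℂ) * (starRingEnd ℂ) (w0 γ θ) * Wd γ ξ θ
        = ((ρ θ * (deriv ξ θ / ρ θ) : ℝ) : ℂ) * ((starRingEnd ℂ) (w0 γ θ) * w0 γ θ)
          + ((ρ θ * ρ θ : ℝ) : ℂ) * ((starRingEnd ℂ) (w0 γ θ) * w0d γ θ) := by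
      unfold Wd
      push_cast
      ring
    rw [expand, mul_comm (ρ θ) _, div_mul_cancel₀ _ (hρpos θ).ne', hρsq θ,
      conj_w0_mul γ hγ0 θ, key1 γ hγ0 θ]
    push_cast [hfdef]
    ring
  -- normSq of wlift
  have hns : ∀ θ, Complex.normSq (wlift γ ξ θ) = (1 + 2 * ξ θ) * gell γ θ := by
    intro θ
    rw [wlift, Complex.normSq_mul, Complex.normSq_ofReal, key2 γ hγ0, hρsq θ]
  -- derivative of u := (1+2ξ)g
  have hu : ∀ θ, HasDerivAt (fun θ => (1 + 2 * ξ θ) * gell γ θ) (2 * f θ) θ := by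
    intro θ
    have hd : HasDerivAt (fun θ : ℝ => 1 + 2 * ξ θ) (2 * deriv ξ θ) θ :=
      (((hξ.differentiable one_ne_zero) θ).hasDerivAt.const_mul 2).const_add 1
    convert hd.fun_mul (hasDerivAt_gell γ θ) using 1
    · rfl
    · rfl
    simp only [hfdef]
    ring
  refine ⟨?_, ?_, ?_⟩
  · -- part (i)
    have hH : ∀ θ, HasDerivAt (fun θ => (1 + 2 * ξ θ) * gell γ θ / 2) (f θ) θ := by
      intro θ
      have := (hu θ).div_const 2
      convert this using 1
      · rfl
      · rfl
      ring
    have hfint : ∫ θ in (0:ℝ)..(2*π), f θ = 0 := by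
      rw [intervalIntegral.integral_eq_sub_of_hasDerivAt (fun θ _ => hH θ)
        (cf.intervalIntegrable _ _)]
      simp [gell, hξ2π]
    have hsplit : (∫ θ in (0:ℝ)..(2 * π), (starRingEnd ℂ) (wlift γ ξ θ) * deriv (wlift γ ξ) θ)
        = Complex.I * ((2*π + 2 * ∫ θ in (0:ℝ)..(2*π), ξ θ : ℝ) : ℂ) := by
      rw [intervalIntegral.integral_congr (g := fun θ =>
        ((f θ : ℝ) : ℂ) + Complex.I * ((1 + 2 * ξ θ : ℝ) : ℂ)) (fun θ _ => hpt θ)]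
      have int1 : IntervalIntegrable (fun θ : ℝ => ((f θ : ℝ) : ℂ)) volume 0 (2*π) :=
        (Complex.continuous_ofReal.comp cf).intervalIntegrable _ _
      have int2 : IntervalIntegrable (fun θ : ℝ => Complex.I * ((1 + 2 * ξ θ : ℝ) : ℂ))
          volume 0 (2*π) := by
        apply Continuous.intervalIntegrable
        fun_prop
      rw [intervalIntegral.integral_add int1 int2]
      have e1 : (∫ θ in (0:ℝ)..(2*π), ((f θ : ℝ) : ℂ)) = 0 := by
        rw [intervalIntegral.integral_ofReal, hfint]; simp
      have e3 : (∫ θ in (0:ℝ)..(2*π), (1 + 2 * ξ θ)) = 2*π + 2 * ∫ θ in (0:ℝ)..(2*π), ξ θ := by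
        rw [intervalIntegral.integral_add intervalIntegrable_const
          ((continuous_const.fun_mul cξ).intervalIntegrable _ _), intervalIntegral.integral_const,
          intervalIntegral.integral_const_mul]
        simp
      have e2 : (∫ θ in (0:ℝ)..(2*π), Complex.I * ((1 + 2 * ξ θ : ℝ) : ℂ))
          = Complex.I * ((2*π + 2 * ∫ θ in (0:ℝ)..(2*π), ξ θ : ℝ) : ℂ) := by
        rw [intervalIntegral.integral_const_mul, intervalIntegral.integral_ofReal, e3]
      rw [e1, e2, zero_add]
    rw [hsplit]
    push_cast
    field_simp
  · -- part (ii)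
    -- clean derivative of A := (1+2ξ)·ρ·g
    set a : ℝ → ℝ := fun θ =>
      3 * deriv ξ θ * ρ θ * gell γ θ
        + (1 + 2 * ξ θ) * ρ θ * ((γ⁻¹ - γ) * (2 * (Real.sin θ * Real.cos θ))) with hadef
    have hA : ∀ θ, HasDerivAt (fun θ => (1 + 2 * ξ θ) * ρ θ * gell γ θ) (a θ) θ := by
      intro θ
      have hd : HasDerivAt (fun θ : ℝ => 1 + 2 * ξ θ) (2 * deriv ξ θ) θ :=
        (((hξ.differentiable one_ne_zero) θ).hasDerivAt.const_mul 2).const_add 1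
      have hgρ := (hd.fun_mul (hasDerivAt_rho ξ hξ hpos θ)).fun_mul (hasDerivAt_gell γ θ)
      convert hgρ using 1
      · rfl
      · rfl
      have h0 : ρ θ ≠ 0 := (hρpos θ).ne'
      have hq : (1 + 2 * ξ θ) * (deriv ξ θ / ρ θ) = deriv ξ θ * ρ θ := by
        rw [← hρsq θ]; field_simp
      simp only [hadef]
      linear_combination (-(gell γ θ)) * hq
    have hF2 : ∀ θ, HasDerivAt (fun θ => (1/3 : ℂ) * (((1 + 2 * ξ θ) * ρ θ * gell γ θ : ℝ) : ℂ) * w0 γ θ)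
        ((1/3 : ℂ) * ((a θ : ℝ) : ℂ) * w0 γ θ
          + (1/3 : ℂ) * (((1 + 2 * ξ θ) * ρ θ * gell γ θ : ℝ) : ℂ) * w0d γ θ) θ := by
      intro θ
      exact (((hA θ).ofReal_comp).const_mul (1/3 : ℂ)).mul (hasDerivAt_w0 γ θ)
    set D : ℝ → ℂ := fun θ => (1/3 : ℂ) * ((a θ : ℝ) : ℂ) * w0 γ θ
      + (1/3 : ℂ) * (((1 + 2 * ξ θ) * ρ θ * gell γ θ : ℝ) : ℂ) * w0d γ θ with hDdef
    have ca : Continuous a := by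
      apply Continuous.add
      · exact ((continuous_const.mul cξ').mul cρ).mul (continuous_gell γ)
      · fun_prop
    have cD : Continuous D := by
      apply Continuous.add
      · exact (continuous_const.mul (Complex.continuous_ofReal.comp ca)).mul (continuous_w0 γ)
      · apply Continuous.mul _ (continuous_w0d γ)
        apply Continuous.mul continuous_const
        exact Complex.continuous_ofReal.comp (((by fun_prop : Continuous (fun θ : ℝ => 1 + 2 * ξ θ)).mul cρ).mul (continuous_gell γ))
    -- pointwise identity for (ii)
    have hpt2 : ∀ θ, ((Complex.normSq (wlift γ ξ θ) : ℝ) : ℂ) * deriv (wlift γ ξ) θ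
        = D θ + ((2/3 : ℂ) * Complex.I) * ((((1 + 2 * ξ θ) * ρ θ : ℝ) : ℂ) * w0 γ θ) := by
      intro θ
      rw [hderiv, hns]
      have hWd : ((1 + 2 * ξ θ : ℝ) : ℂ) * Wd γ ξ θ
          = ((deriv ξ θ * ρ θ : ℝ) : ℂ) * w0 γ θ
            + (((1 + 2 * ξ θ) * ρ θ : ℝ) : ℂ) * w0d γ θ := by
        have h0 : ρ θ ≠ 0 := (hρpos θ).ne'
        have hq : (1 + 2 * ξ θ) * (deriv ξ θ / ρ θ) = deriv ξ θ * ρ θ := by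
          rw [← hρsq θ]; field_simp
        unfold Wd
        push_cast
        rw [show ((1:ℂ) + 2 * ξ θ) * (↑(deriv ξ θ) / ↑(ρ θ) * w0 γ θ + ↑(ρ θ) * w0d γ θ)
            = (((1:ℂ) + 2 * ξ θ) * (↑(deriv ξ θ) / ↑(ρ θ))) * w0 γ θ
              + (((1:ℂ) + 2 * ξ θ) * ↑(ρ θ)) * w0d γ θ by ring]
        congr 1
        · congr 1
          have := congrArg (Complex.ofReal) hq
          push_cast at this
          exact this
      have step : (((1 + 2 * ξ θ) * gell γ θ : ℝ) : ℂ) * Wd γ ξ θ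
          = ((gell γ θ : ℝ) : ℂ) * (((1 + 2 * ξ θ : ℝ) : ℂ) * Wd γ ξ θ) := by
        push_cast; ring
      rw [step, hWd]
      have hk4 := key4 γ hγ0 θ
      simp only [hDdef, hadef]
      push_cast at hk4 ⊢
      linear_combination ((2/3 : ℂ) * ((1 : ℂ) + 2 * ξ θ) * (ρ θ : ℂ)) * hk4
    -- integrate
    have hDint : (∫ θ in (0:ℝ)..(2*π), D θ) = 0 := by
      rw [intervalIntegral.integral_eq_sub_of_hasDerivAt (fun θ _ => hF2 θ)
        (cD.intervalIntegrable _ _)]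
      simp only [hρdef]
      rw [hξ2π]
      simp [gell, w0]
    have hrem : Continuous (fun θ : ℝ => (((1 + 2 * ξ θ) * ρ θ : ℝ) : ℂ) * w0 γ θ) := by
      apply Continuous.mul _ (continuous_w0 γ)
      exact Complex.continuous_ofReal.comp ((by fun_prop : Continuous (fun θ : ℝ => 1 + 2 * ξ θ)).mul cρ)
    have hsplit : (∫ θ in (0:ℝ)..(2 * π),
          ((Complex.normSq (wlift γ ξ θ) : ℝ) : ℂ) * deriv (wlift γ ξ) θ)
        = ((2/3 : ℂ) * Complex.I) *
            ∫ θ in (0:ℝ)..(2*π), (((1 + 2 * ξ θ) * ρ θ : ℝ) : ℂ) * w0 γ θ := by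
      rw [intervalIntegral.integral_congr (g := fun θ => D θ
        + ((2/3 : ℂ) * Complex.I) * ((((1 + 2 * ξ θ) * ρ θ : ℝ) : ℂ) * w0 γ θ))
        (fun θ _ => hpt2 θ)]
      rw [intervalIntegral.integral_add (cD.intervalIntegrable _ _)
        ((continuous_const.fun_mul hrem).intervalIntegrable _ _), hDint, zero_add,
        intervalIntegral.integral_const_mul]
    have hpow : ∀ θ : ℝ, ((1 + 2 * ξ θ) ^ ((3:ℝ)/2) : ℝ) = (1 + 2 * ξ θ) * ρ θ := by
      intro θ
      have hρr : ρ θ = (1 + 2 * ξ θ) ^ ((1:ℝ)/2) := by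
        rw [hρdef]; exact Real.sqrt_eq_rpow _
      rw [show ((3:ℝ)/2) = 1 + 1/2 by norm_num, Real.rpow_add (hpos θ), Real.rpow_one, hρr]
    have hcong : (∫ θ in (0:ℝ)..(2 * π), (((1 + 2 * ξ θ) ^ ((3:ℝ)/2) : ℝ) : ℂ) * w0 γ θ)
        = ∫ θ in (0:ℝ)..(2*π), (((1 + 2 * ξ θ) * ρ θ : ℝ) : ℂ) * w0 γ θ := by
      apply intervalIntegral.integral_congr
      intro θ _
      dsimp only
      rw [hpow θ]
    rw [hsplit, hcong]
    field_simp
  · -- part (iii)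
    set h : ℝ → ℝ := fun θ => (1 + 2 * ξ θ) * gell γ θ * f θ with hhdef
    have hpt3 : ∀ θ, ((Complex.normSq (wlift γ ξ θ) : ℝ) : ℂ) *
          (starRingEnd ℂ) (wlift γ ξ θ) * deriv (wlift γ ξ) θ
        = ((h θ : ℝ) : ℂ) + Complex.I * (((1 + 2 * ξ θ) ^ 2 * gell γ θ : ℝ) : ℂ) := by
      intro θ
      rw [mul_assoc, hpt θ, hns θ]
      simp only [hhdef]
      push_cast
      ring
    have ch : Continuous h := by
      exact ((by fun_prop : Continuous (fun θ : ℝ => 1 + 2 * ξ θ)).mul (continuous_gell γ)).mul cf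
    have hH3 : ∀ θ, HasDerivAt (fun θ => ((1 + 2 * ξ θ) * gell γ θ) ^ 2 / 4) (h θ) θ := by
      intro θ
      have := ((hu θ).fun_mul (hu θ)).div_const 4
      convert this using 1
      · rfl
      · rfl
      simp only [hhdef, pow_two]
      ring
    have hhint : ∫ θ in (0:ℝ)..(2*π), h θ = 0 := by
      rw [intervalIntegral.integral_eq_sub_of_hasDerivAt (fun θ _ => hH3 θ)
        (ch.intervalIntegrable _ _)]
      simp [gell, hξ2π]
    have hsplit : (∫ θ in (0:ℝ)..(2 * π),
          ((Complex.normSq (wlift γ ξ θ) : ℝ) : ℂ) *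
            (starRingEnd ℂ) (wlift γ ξ θ) * deriv (wlift γ ξ) θ)
        = Complex.I * ((∫ θ in (0:ℝ)..(2*π), (1 + 2 * ξ θ) ^ 2 * gell γ θ : ℝ) : ℂ) := by
      rw [intervalIntegral.integral_congr (g := fun θ =>
        ((h θ : ℝ) : ℂ) + Complex.I * (((1 + 2 * ξ θ) ^ 2 * gell γ θ : ℝ) : ℂ))
        (fun θ _ => hpt3 θ)]
      have int1 : IntervalIntegrable (fun θ : ℝ => ((h θ : ℝ) : ℂ)) volume 0 (2*π) :=
        (Complex.continuous_ofReal.comp ch).intervalIntegrable _ _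
      have cP2g : Continuous (fun θ : ℝ => (1 + 2 * ξ θ) ^ 2 * gell γ θ) :=
        (by fun_prop : Continuous (fun θ : ℝ => (1 + 2 * ξ θ) ^ 2)).mul (continuous_gell γ)
      have int2 : IntervalIntegrable
          (fun θ : ℝ => Complex.I * (((1 + 2 * ξ θ) ^ 2 * gell γ θ : ℝ) : ℂ)) volume 0 (2*π) :=
        (continuous_const.mul (Complex.continuous_ofReal.comp cP2g)).intervalIntegrable _ _
      rw [intervalIntegral.integral_add int1 int2]
      have e1 : (∫ θ in (0:ℝ)..(2*π), ((h θ : ℝ) : ℂ)) = 0 := by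
        rw [intervalIntegral.integral_ofReal, hhint]; simp
      rw [e1, zero_add, intervalIntegral.integral_const_mul, intervalIntegral.integral_ofReal]
    rw [hsplit]
    push_cast
    field_simp
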